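/- Let T be a tree decomposition of a graph G, let x and y be vertices of G, and let P = (x = p_0, p_1, ..., p_l = y) be a path from x to y in G. Let X and Y be bags of T containing x and y respectively. Then every bag on the unique path in T between X and Y contains at least one vertex p_i of P. -/
import Mathlib


/-- A tree decomposition of a graph `G` on vertex set `V`, indexed by `I`. -/
structure TreeDecomp (V : Type) (G : SimpleGraph V) (I : Type) where
  T : SimpleGraph I
  isTree : T.IsTree
  bag : I → Set V
  covers : ∀ v : V, ∃ i, v ∈ bag i
  edgeBag : ∀ ⦃v w : V⦄, G.Adj v w → ∃ i, v ∈ bag i ∧ w ∈ bag i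
  sep : ∀ ⦃i j k : I⦄ (p : T.Walk i k), p.IsPath → j ∈ p.support →
    bag i ∩ bag k ⊆ bag j

/-- Every bag on the path in `T` between a bag containing `x` and a bag
containing `y` contains at least one vertex of any path `P` from `x` to `y` in `G`. -/
theorem bags_on_tree_path_meet_path {V I : Type} {G : SimpleGraph V}
    (td : TreeDecomp V G I) {x y : V} (P : G.Walk x y) (hP : P.IsPath)
    (X Y : I) (hx : x ∈ td.bag X) (hy : y ∈ td.bag Y)
    (Q : td.T.Walk X Y) (hQ : Q.IsPath) :
    ∀ J ∈ Q.support, ∃ v ∈ P.support, v ∈ td.bag J := by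
  classical
  intro J hJ
  induction P generalizing X Q with
  | nil =>
    exact ⟨_, by simp, td.sep Q hQ hJ ⟨hx, hy⟩⟩
  | @cons a b c hab P' ih =>
    obtain ⟨W, haW, hbW⟩ := td.edgeBag hab
    -- path from X to W
    obtain ⟨S⟩ : td.T.Reachable X W := td.isTree.isConnected X W
    -- path from W to Y
    obtain ⟨R⟩ : td.T.Reachable W Y := td.isTree.isConnected W Y
    have hkey : J ∈ S.bypass.support ∨ J ∈ R.bypass.support := by
      obtain ⟨p, -, hup⟩ := td.isTree.existsUnique_path X Y
      have heq : (S.bypass.append R.bypass).bypass = Q := by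
        rw [hup _ ((S.bypass.append R.bypass).bypass_isPath), hup _ hQ]
      have : J ∈ (S.bypass.append R.bypass).support := by
        rw [← heq] at hJ
        exact SimpleGraph.Walk.support_bypass_subset _ hJ
      rw [SimpleGraph.Walk.mem_support_append_iff] at this
      exact this
    rcases hkey with h | h
    · exact ⟨a, by simp, td.sep S.bypass S.bypass_isPath h ⟨hx, haW⟩⟩
    · obtain ⟨v, hv, hvJ⟩ := ih hP.of_cons W hbW hy R.bypass R.bypass_isPath h
      exact ⟨v, by simp [hv], hvJ⟩
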